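/- Let Ψ ∈ L^∞(M_n) be such that the Toeplitz operator T_{zΨ} : H²(ℂ^n) → H²(ℂ^n) is surjective. Then dim ker T_Ψ ≥ n. -/

import Mathlib

open MeasureTheory ComplexConjugate

noncomputable section

namespace MeroIdx

/-! Singular values and essential norm of operators between Hilbert spaces -/

variable {H K : Type*} [NormedAddCommGroup H] [InnerProductSpace ℂ H]
  [NormedAddCommGroup K] [InnerProductSpace ℂ K]

/-- `sValue m T` is the `m`-th singular value of `T`, defined as the distance from `T`
to the operators of rank at most `m`. -/
def sValue (m : ℕ) (T : H →L[ℂ] K) : ℝ :=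
  sInf { c : ℝ | ∃ R : H →L[ℂ] K, Module.rank ℂ ↥(LinearMap.range (R : H →ₗ[ℂ] K)) ≤ m ∧ c = ‖T - R‖ }

/-- The essential norm of `T` : the distance from `T` to the compact operators. -/
def essNorm (T : H →L[ℂ] K) : ℝ :=
  sInf { c : ℝ | ∃ S : H →L[ℂ] K, IsCompactOperator S ∧ c = ‖T - S‖ }

/-! The circle, L², Hardy space -/

instance : Fact (0 < 2 * Real.pi) := ⟨by positivity⟩

abbrev circ : Type := AddCircle (2 * Real.pi)

/-- Normalized Lebesgue (Haar) measure on the circle. -/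
def mu : Measure circ := @AddCircle.haarAddCircle (2 * Real.pi) _

instance : IsProbabilityMeasure mu := by unfold mu; infer_instance

abbrev L2 (m : ℕ) := Lp (EuclideanSpace ℂ (Fin m)) 2 mu

/-- The function `ζ ↦ ζ` on the circle (i.e. `t ↦ exp (i t)`). -/
def expmap : circ → ℂ := fun t => fourier 1 t

/-- The element `z^k ⬝ e_i` of `L²(ℂ^m)`. -/
def fvec (m : ℕ) (k : ℤ) (i : Fin m) : L2 m :=
  ContinuousMap.toLp 2 mu ℂ
    ⟨fun t => (fourier k t : ℂ) • (EuclideanSpace.single i (1 : ℂ)),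
      ((fourier k).continuous).smul continuous_const⟩

/-- The span of the negative-frequency basis vectors. -/
def negSpan (m : ℕ) : Submodule ℂ (L2 m) :=
  Submodule.span ℂ { f | ∃ k : ℤ, k < 0 ∧ ∃ i : Fin m, f = fvec m k i }

/-- The Hardy space `H²(ℂ^m)`: the orthogonal complement of the negative frequencies,
i.e. the functions in `L²` whose negative Fourier coefficients vanish. -/
def Hardy (m : ℕ) : Submodule ℂ (L2 m) := (negSpan m)ᗮ

instance (m : ℕ) : CompleteSpace ↥(Hardy m) :=
  (Submodule.isClosed_orthogonal _).completeSpace_coe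

/-- Orthogonal projection onto the Hardy space. -/
def Pplus (m : ℕ) : L2 m →L[ℂ] ↥(Hardy m) := Submodule.orthogonalProjection (Hardy m)

/-- `P₊` as an endomorphism of `L²`. -/
def PplusL (m : ℕ) : L2 m →L[ℂ] L2 m := (Hardy m).subtypeL.comp (Pplus m)

/-- `P₋ = I - P₊`, the orthogonal projection onto `H²₋(ℂ^m) = L² ⊖ H²`. -/
def PminusL (m : ℕ) : L2 m →L[ℂ] L2 m := ContinuousLinearMap.id ℂ (L2 m) - PplusL m

/-! Matrix symbols, multiplication operators, Hankel and Toeplitz operators -/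

/-- The continuous linear map `ℂ^n → ℂ^m` given by a matrix. -/
def matCLM {m n : ℕ} (A : Matrix (Fin m) (Fin n) ℂ) :
    EuclideanSpace ℂ (Fin n) →L[ℂ] EuclideanSpace ℂ (Fin m) :=
  LinearMap.toContinuousLinearMap (Matrix.toEuclideanLin A)

/-- The operator norm of a matrix (as an operator `ℓ²(n) → ℓ²(m)`). -/
def matOpNorm {m n : ℕ} (A : Matrix (Fin m) (Fin n) ℂ) : ℝ := ‖matCLM A‖

/-- The `j`-th singular value of a matrix. -/
def matSV {m n : ℕ} (j : ℕ) (A : Matrix (Fin m) (Fin n) ℂ) : ℝ := sValue j (matCLM A)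

/-- Essential supremum of a (nonnegative) real function on the circle. -/
def essSupR (g : circ → ℝ) : ℝ := (essSup (fun t => ENNReal.ofReal (g t)) mu).toReal

/-- The `L^∞(M_{m,n})`-norm: essential supremum of the pointwise operator norm. -/
def linfNorm {m n : ℕ} (Φ : circ → Matrix (Fin m) (Fin n) ℂ) : ℝ :=
  essSupR fun t => matOpNorm (Φ t)

/-- `M` is the operator of multiplication by the matrix function `Φ` on `L²`. -/
def IsMulOp {m n : ℕ} (Φ : circ → Matrix (Fin m) (Fin n) ℂ) (M : L2 n →L[ℂ] L2 m) : Prop :=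
  ∀ f : L2 n, (M f : circ → EuclideanSpace ℂ (Fin m))
      =ᵐ[mu] fun t => Matrix.toEuclideanLin (Φ t) (f t)

/-- The Hankel operator `H_Φ = P₋ M_Φ : H²(ℂ^n) → H²₋(ℂ^m) ⊆ L²(ℂ^m)`,
presented in terms of the multiplication operator `M = M_Φ`. -/
def Hankel {m n : ℕ} (M : L2 n →L[ℂ] L2 m) : ↥(Hardy n) →L[ℂ] L2 m :=
  (PminusL m).comp (M.comp (Hardy n).subtypeL)

/-- The Toeplitz operator `T_Φ = P₊ M_Φ : H²(ℂ^n) → H²(ℂ^m)`. -/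
def Toeplitz {m n : ℕ} (M : L2 n →L[ℂ] L2 m) : ↥(Hardy n) →L[ℂ] ↥(Hardy m) :=
  (Pplus m).comp (M.comp (Hardy n).subtypeL)

/-! Blaschke–Potapov products and the class `H^∞_{(k)}` -/

/-- An elementary Blaschke–Potapov factor. -/
def bpFactor {n : ℕ} (l : ℂ) (P : Matrix (Fin n) (Fin n) ℂ) (z : ℂ) :
    Matrix (Fin n) (Fin n) ℂ :=
  ((z - l) / (1 - (starRingEnd ℂ) l * z)) • P + (1 - P)

/-- `B` (as a function on the circle) is the boundary-value function of a finite
Blaschke–Potapov product of degree `k`. -/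
def IsBPProd (n k : ℕ) (B : circ → Matrix (Fin n) (Fin n) ℂ) : Prop :=
  ∃ (r : ℕ) (U : Matrix (Fin n) (Fin n) ℂ) (l : Fin r → ℂ)
    (P : Fin r → Matrix (Fin n) (Fin n) ℂ),
    U ∈ Matrix.unitaryGroup (Fin n) ℂ ∧ (∀ j, ‖l j‖ < 1) ∧
    (∀ j, IsSelfAdjoint (P j) ∧ P j * P j = P j) ∧
    (∑ j, (P j).rank) = k ∧
    ∀ t, B t = U * (List.ofFn fun j => bpFactor (l j) (P j) (expmap t)).prod

/-- `Q ∈ H^∞_{(k)}(M_{m,n})`: there is a Blaschke–Potapov product `B` of degree `k`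
such that `QB ∈ H^∞`, i.e. multiplication by `QB` maps `H²(ℂ^n)` into `H²(ℂ^m)`. -/
def HkClass {m n : ℕ} (k : ℕ) (Q : circ → Matrix (Fin m) (Fin n) ℂ) : Prop :=
  ∃ (B : circ → Matrix (Fin n) (Fin n) ℂ) (M : L2 n →L[ℂ] L2 m),
    IsBPProd n k B ∧ IsMulOp (fun t => Q t * B t) M ∧
    ∀ f : L2 n, f ∈ Hardy n → M f ∈ Hardy m

/-- The nested sets `Ω_j^{(k)}(Φ)` from superoptimal approximation:
`Ω_0` consists of the best approximants from `H^∞_{(k)}` in the `L^∞` norm and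
`Ω_{j+1}` consists of those elements of `Ω_j` minimizing `ess sup s_{j+1}(Φ - Q)`. -/
def Omega {m n : ℕ} (k : ℕ) (Φ : circ → Matrix (Fin m) (Fin n) ℂ) :
    ℕ → Set (circ → Matrix (Fin m) (Fin n) ℂ)
  | 0 => { Q | HkClass k Q ∧ ∀ Q', HkClass k Q' →
      linfNorm (fun t => Φ t - Q t) ≤ linfNorm (fun t => Φ t - Q' t) }
  | (j+1) => { Q | Q ∈ Omega k Φ j ∧ ∀ Q' ∈ Omega k Φ j,
      essSupR (fun t => matSV (j+1) (Φ t - Q t)) ≤ essSupR (fun t => matSV (j+1) (Φ t - Q' t)) }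

/-- The superoptimal singular values `t_j^{(k)}(Φ)` of degree `k`. -/
def tSV {m n : ℕ} (k : ℕ) (Φ : circ → Matrix (Fin m) (Fin n) ℂ) (j : ℕ) : ℝ :=
  sInf { v : ℝ | ∃ Q ∈ Omega k Φ j, v = essSupR fun t => matSV j (Φ t - Q t) }

/-- `Φ` is `k`-admissible: `s_k(H_Φ) < s_{k-1}(H_Φ)` and the essential norm of `H_Φ`
is less than every nonzero superoptimal singular value of degree `k` of `Φ`. -/
def kAdmissible {n : ℕ} (k : ℕ) (Φ : circ → Matrix (Fin n) (Fin n) ℂ)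
    (MΦ : L2 n →L[ℂ] L2 n) : Prop :=
  IsMulOp Φ MΦ ∧ sValue k (Hankel MΦ) < sValue (k-1) (Hankel MΦ) ∧
  ∀ j : ℕ, tSV k Φ j ≠ 0 → essNorm (Hankel MΦ) < tSV k Φ j

/-- The squared weighted norm `‖f‖²_W = ∫ (W(ζ) f(ζ), f(ζ)) dm(ζ)` for a matrix weight. -/
def wNormSq {n : ℕ} (W : circ → Matrix (Fin n) (Fin n) ℂ) (f : L2 n) : ℝ :=
  ∫ t, (inner ℂ (Matrix.toEuclideanLin (W t) (f t)) (f t) : ℂ).re ∂mu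

/-- `J` is the flip operator `(Jf)(ζ) = conj ζ • conj (f ζ)` on `L²(ℂ^m)`. -/
def IsFlip (m : ℕ) (J : L2 m → L2 m) : Prop :=
  ∀ f : L2 m, (J f : circ → EuclideanSpace ℂ (Fin m)) =ᵐ[mu]
    fun t => (starRingEnd ℂ) (expmap t) •
      (WithLp.toLp 2 (fun i => (starRingEnd ℂ) (f t i)) : EuclideanSpace ℂ (Fin m))

/-- `Φ ∈ L^∞(M_{m,n})`: measurable and essentially bounded. -/
def MemLinf {m n : ℕ} (Φ : circ → Matrix (Fin m) (Fin n) ℂ) : Prop :=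
  AEStronglyMeasurable Φ mu ∧
    essSup (fun t => ENNReal.ofReal (matOpNorm (Φ t))) mu < ⊤

/-! Auxiliary lemmas for Statement 12 -/

section Aux

local notation "⟪" x ", " y "⟫" => @inner ℂ _ _ x y

variable {n : ℕ}

lemma norm_fourier_eq_one (k : ℤ) (t : circ) : ‖(fourier k t : ℂ)‖ = 1 := by
  rw [fourier_apply, Circle.norm_coe]

lemma memℒp_fourier_smul (k : ℤ) (g : L2 n) :
    MemLp (fun t => (fourier k t : ℂ) • (g t : EuclideanSpace ℂ (Fin n))) 2 mu := by
  refine (Lp.memLp g).of_le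
    (((fourier k).continuous.aestronglyMeasurable).smul (Lp.aestronglyMeasurable g)) ?_
  filter_upwards with t
  rw [norm_smul, norm_fourier_eq_one, one_mul]

/-- Multiplication by `z^k` on `L²(ℂⁿ)` (as a plain function). -/
def fmul (k : ℤ) (g : L2 n) : L2 n := (memℒp_fourier_smul k g).toLp _

lemma fmul_coeFn (k : ℤ) (g : L2 n) :
    (fmul k g : circ → EuclideanSpace ℂ (Fin n)) =ᵐ[mu]
      fun t => (fourier k t : ℂ) • g t :=
  MemLp.coeFn_toLp _

lemma fvec_coeFn (k : ℤ) (i : Fin n) :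
    (fvec n k i : circ → EuclideanSpace ℂ (Fin n)) =ᵐ[mu]
      fun t => (fourier k t : ℂ) • EuclideanSpace.single i (1 : ℂ) :=
  ContinuousMap.coeFn_toLp (p := 2) (μ := mu) (𝕜 := ℂ) _

lemma fmul_fvec (k l : ℤ) (i : Fin n) : fmul k (fvec n l i) = fvec n (k + l) i := by
  apply Lp.ext
  filter_upwards [fmul_coeFn k (fvec n l i), fvec_coeFn l i, fvec_coeFn (k + l) i]
    with t h1 h2 h3
  rw [h1, h2, h3, smul_smul, ← fourier_add]

lemma fmul_fmul (k l : ℤ) (g : L2 n) : fmul k (fmul l g) = fmul (k + l) g := by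
  apply Lp.ext
  filter_upwards [fmul_coeFn k (fmul l g), fmul_coeFn l g, fmul_coeFn (k + l) g]
    with t h1 h2 h3
  rw [h1, h2, h3, smul_smul, ← fourier_add]

lemma fmul_zero_eq (g : L2 n) : fmul 0 g = g := by
  apply Lp.ext
  filter_upwards [fmul_coeFn 0 g] with t h1
  rw [h1, fourier_zero, one_smul]

lemma inner_fmul_left (k : ℤ) (u g : L2 n) : ⟪fmul (-k) u, g⟫ = ⟪u, fmul k g⟫ := by
  rw [MeasureTheory.L2.inner_def, MeasureTheory.L2.inner_def]
  refine integral_congr_ae ?_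
  filter_upwards [fmul_coeFn (-k) u, fmul_coeFn k g] with t h1 h2
  rw [h1, h2, inner_smul_left, inner_smul_right, fourier_neg]
  simp

lemma inner_fvec_eq_zero_of_mem_Hardy {g : L2 n} (hg : g ∈ Hardy n)
    (k : ℤ) (hk : k < 0) (i : Fin n) : ⟪fvec n k i, g⟫ = 0 :=
  (Submodule.mem_orthogonal (negSpan n) g).mp hg _
    (Submodule.subset_span ⟨k, hk, i, rfl⟩)

lemma mem_Hardy_of_inner {g : L2 n}
    (h : ∀ (k : ℤ), k < 0 → ∀ i, ⟪fvec n k i, g⟫ = 0) : g ∈ Hardy n := by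
  refine (Submodule.mem_orthogonal (negSpan n) g).mpr ?_
  intro u hu
  induction hu using Submodule.span_induction with
  | mem x hx => obtain ⟨k, hk, i, rfl⟩ := hx; exact h k hk i
  | zero => simp
  | add x y hx hy ihx ihy => rw [inner_add_left, ihx, ihy, add_zero]
  | smul c x hx ihx => rw [inner_smul_left, ihx, mul_zero]

lemma integral_fourier_mul (k l : ℤ) :
    ∫ t, (starRingEnd ℂ) (fourier k t) * fourier l t ∂mu
      = if k = l then (1 : ℂ) else 0 := by
  unfold mu
  have h := orthonormal_iff_ite.mp (@orthonormal_fourier (2 * Real.pi) _) k l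
  rw [MeasureTheory.L2.inner_def] at h
  rw [← h]
  refine integral_congr_ae ?_
  filter_upwards [coeFn_fourierLp 2 k, coeFn_fourierLp 2 l] with t h1 h2
  rw [RCLike.inner_apply, h1, h2, mul_comm]

lemma inner_fvec (k l : ℤ) (i j : Fin n) :
    ⟪fvec n k i, fvec n l j⟫ = if k = l ∧ i = j then (1 : ℂ) else 0 := by
  rw [MeasureTheory.L2.inner_def]
  have h : (fun t => (⟪(fvec n k i) t, (fvec n l j) t⟫ : ℂ)) =ᵐ[mu]
      fun t => (if i = j then (1 : ℂ) else 0) *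
        ((starRingEnd ℂ) (fourier k t) * fourier l t) := by
    filter_upwards [fvec_coeFn k i, fvec_coeFn l j] with t h1 h2
    rw [h1, h2, inner_smul_left, inner_smul_right, EuclideanSpace.inner_single_left,
      EuclideanSpace.single_apply]
    by_cases hij : i = j <;> simp [hij, eq_comm]
  rw [integral_congr_ae h, integral_const_mul, integral_fourier_mul]
  by_cases hkl : k = l <;> by_cases hij : i = j <;> simp [hkl, hij]

lemma fvec_zero_mem_Hardy (i : Fin n) : fvec n 0 i ∈ Hardy n := by
  refine mem_Hardy_of_inner fun k hk j => ?_
  rw [inner_fvec]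
  simp [hk.ne]

lemma fmul_one_mem_Hardy {g : L2 n} (hg : g ∈ Hardy n) : fmul 1 g ∈ Hardy n := by
  refine mem_Hardy_of_inner fun k hk i => ?_
  have h := inner_fmul_left (n := n) 1 (fvec n k i) g
  rw [fmul_fvec] at h
  rw [← h]
  exact inner_fvec_eq_zero_of_mem_Hardy hg (-1 + k) (by omega) i

end Aux

/-- If the Toeplitz operator `T_{zΨ}` is surjective, then
`dim ker T_Ψ ≥ n`. -/
theorem rank_ker_toeplitz_ge_of_surjective (n : ℕ)
    (Ψ : circ → Matrix (Fin n) (Fin n) ℂ) (hΨ : MemLinf Ψ)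
    (M : L2 n →L[ℂ] L2 n) (hM : IsMulOp Ψ M)
    (Mz : L2 n →L[ℂ] L2 n) (hMz : IsMulOp (fun t => expmap t • Ψ t) Mz)
    (hsurj : Function.Surjective (Toeplitz Mz)) :
    (n : Cardinal) ≤ Module.rank ℂ ↥(LinearMap.ker (Toeplitz M : ↥(Hardy n) →ₗ[ℂ] ↥(Hardy n))) := by
  classical
  have hconst : ∀ i : Fin n, fvec n 0 i ∈ Hardy n := fvec_zero_mem_Hardy
  choose f hf using fun i : Fin n => hsurj ⟨fvec n 0 i, hconst i⟩
  -- relation between `M` and `Mz` : `M u = z̄ • (Mz u)`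
  have hzM : ∀ u : ↥(Hardy n), M (u : L2 n) = fmul (-1) (Mz (u : L2 n)) := by
    intro u
    have h1 : Mz (u : L2 n) = fmul 1 (M (u : L2 n)) := by
      apply Lp.ext
      filter_upwards [hMz (u : L2 n), hM (u : L2 n), fmul_coeFn 1 (M (u : L2 n))]
        with t e1 e2 e3
      rw [e1, e3, e2]
      simp only [_root_.map_smul, LinearMap.smul_apply]
      rfl
    rw [h1, fmul_fmul]
    norm_num [fmul_zero_eq]
  -- every `f i` lies in the kernel of `T_Ψ`
  have hker : ∀ i, Toeplitz M (f i) = 0 := by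
    intro i
    have hmem : M ((f i : L2 n)) ∈ (Hardy n)ᗮ := by
      rw [Submodule.mem_orthogonal]
      intro g hg
      have key : (inner ℂ g (M ((f i : L2 n))) : ℂ)
          = inner ℂ (fmul 1 g) (Mz ((f i : L2 n))) := by
        rw [hzM (f i), ← inner_conj_symm, inner_fmul_left, inner_conj_symm]
      rw [key]
      have h2 : ((Submodule.orthogonalProjection (Hardy n) (Mz ((f i : L2 n)))) : L2 n)
          = fvec n 0 i := by
        have h2' : Submodule.orthogonalProjection (Hardy n) (Mz ((f i : L2 n)))
            = Toeplitz Mz (f i) := rfl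
        rw [h2', hf i]
      have hw : Mz ((f i : L2 n)) - fvec n 0 i ∈ (Hardy n)ᗮ := by
        have h3 : Mz ((f i : L2 n)) - ((Submodule.orthogonalProjection (Hardy n) (Mz ((f i : L2 n)))) : L2 n) ∈ (Hardy n)ᗮ :=
          Submodule.sub_starProjection_mem_orthogonal (K := Hardy n) (Mz ((f i : L2 n)))
        rwa [h2] at h3
      have hmem1 : fmul 1 g ∈ Hardy n := fmul_one_mem_Hardy hg
      have e1 : (inner ℂ (fmul 1 g) (Mz ((f i : L2 n)) - fvec n 0 i) : ℂ) = 0 :=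
        (Submodule.mem_orthogonal (Hardy n) _).mp hw _ hmem1
      have e2 : (inner ℂ (fmul 1 g) (fvec n 0 i) : ℂ) = 0 := by
        rw [← inner_conj_symm]
        have h := inner_fmul_left (n := n) 1 (fvec n 0 i) g
        rw [fmul_fvec] at h
        rw [← h, inner_fvec_eq_zero_of_mem_Hardy hg (-1 + 0) (by omega) i, map_zero]
      calc (inner ℂ (fmul 1 g) (Mz ((f i : L2 n))) : ℂ)
          = inner ℂ (fmul 1 g) ((Mz ((f i : L2 n)) - fvec n 0 i) + fvec n 0 i) := by
            rw [sub_add_cancel]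
        _ = 0 := by rw [inner_add_right, e1, e2, add_zero]
    exact (Submodule.orthogonalProjectionOnto_eq_zero_iff (K := Hardy n)).mpr hmem
  -- the constants form an orthonormal, hence independent, family
  have hortho : Orthonormal ℂ (fun i : Fin n => (⟨fvec n 0 i, hconst i⟩ : Hardy n)) := by
    rw [orthonormal_iff_ite]
    intro i j
    rw [Submodule.coe_inner, inner_fvec]
    simp
  have hli0 : LinearIndependent ℂ fun i : Fin n => Toeplitz Mz (f i) := by
    have h := hortho.linearIndependent
    have hsu : (fun i : Fin n => Toeplitz Mz (f i))
        = fun i => (⟨fvec n 0 i, hconst i⟩ : Hardy n) := funext fun i => hf i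
    rw [hsu]
    exact h
  have hmemker : ∀ i, f i ∈ LinearMap.ker (Toeplitz M : ↥(Hardy n) →ₗ[ℂ] ↥(Hardy n)) :=
    fun i => LinearMap.mem_ker.mpr (hker i)
  have hli : LinearIndependent ℂ
      fun i : Fin n => (⟨f i, hmemker i⟩ : LinearMap.ker (Toeplitz M : ↥(Hardy n) →ₗ[ℂ] ↥(Hardy n))) := by
    apply LinearIndependent.of_comp
      ((Toeplitz Mz).toLinearMap.comp (LinearMap.ker (Toeplitz M : ↥(Hardy n) →ₗ[ℂ] ↥(Hardy n))).subtype)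
    exact hli0
  have hcard := hli.cardinal_le_rank
  simpa using hcard

end MeroIdx
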